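/- arXiv:1609.07048 — 8 statements merged into one kernel-verified Lean document; each statement's English description precedes it below -/
import Mathlib

section
/- For every subset B of ℝ^d, the Minkowski sum of B with d copies of the convex hull of B equals (d+1) times the convex hull of B; that is, B + d·CH(B) = (d+1)·CH(B), where d·S denotes the scalar dilation {d·s : s ∈ S}. -/
open Pointwise

theorem minkowski_sum_convexHull_dilation (d : ℕ) (B : Set (Fin d → ℝ)) :
    B + (d : ℝ) • convexHull ℝ B = ((d : ℝ) + 1) • convexHull ℝ B := by
  have hconv : Convex ℝ (convexHull ℝ B) := convex_convexHull ℝ B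
  have hsplit : ((d : ℝ) + 1) • convexHull ℝ B
      = (d : ℝ) • convexHull ℝ B + (1 : ℝ) • convexHull ℝ B :=
    hconv.add_smul (by positivity) zero_le_one
  apply Set.Subset.antisymm
  · -- easy direction
    rw [hsplit, one_smul]
    intro x hx
    obtain ⟨b, hb, y, hy, rfl⟩ := hx
    show b + y ∈ _
    rw [add_comm b y]
    exact Set.add_mem_add hy (subset_convexHull ℝ B hb)
  · rcases Nat.eq_zero_or_pos d with rfl | hd
    · -- d = 0, subsingleton space
      intro x hx
      obtain ⟨z, hz, rfl⟩ := hx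
      have hB : B.Nonempty := by
        by_contra h
        rw [Set.not_nonempty_iff_eq_empty] at h
        simp [h] at hz
      obtain ⟨b, hb⟩ := hB
      exact ⟨b, hb, ((0:ℕ):ℝ) • z, ⟨z, hz, rfl⟩, Subsingleton.elim _ _⟩
    · intro x hx
      obtain ⟨z, hz, rfl⟩ := hx
      rw [convexHull_eq_union] at hz
      simp only [Set.mem_iUnion] at hz
      obtain ⟨t, hts, hai, hzt⟩ := hz
      -- card bound
      have hcard : t.card ≤ d + 1 := by
        have := hai.card_le_finrank_succ
        rw [Fintype.card_coe] at this
        refine this.trans ?_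
        have h2 : Module.finrank ℝ (vectorSpan ℝ (Set.range ((↑) : t → Fin d → ℝ)))
            ≤ Module.finrank ℝ (Fin d → ℝ) := Submodule.finrank_le _
        simpa using Nat.add_le_add_right h2 1
      rw [Finset.convexHull_eq] at hzt
      obtain ⟨w, hw0, hw1, hwz⟩ := hzt
      -- pigeonhole: some weight ≥ 1/(d+1)
      have hne : t.Nonempty := by
        rcases t.eq_empty_or_nonempty with rfl | h
        · simp at hw1
        · exact h
      have hpig : ∃ i ∈ t, 1 / ((d : ℝ) + 1) ≤ w i := by
        by_contra h
        push_neg at h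
        have hlt : (1 : ℝ) = ∑ i ∈ t, w i := hw1.symm
        have : ∑ i ∈ t, w i < ∑ i ∈ t, 1 / ((d : ℝ) + 1) :=
          Finset.sum_lt_sum_of_nonempty hne (fun i hi => h i hi)
        rw [Finset.sum_const, nsmul_eq_mul] at this
        have hle : (t.card : ℝ) * (1 / ((d : ℝ) + 1)) ≤ 1 := by
          rw [mul_one_div, div_le_one (by positivity)]
          exact_mod_cast hcard
        linarith
      obtain ⟨i, hit, hwi⟩ := hpig
      -- new weights
      set u : (Fin d → ℝ) → ℝ := fun j => ((d : ℝ) + 1) * w j - (if j = i then 1 else 0) with hu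
      have hu0 : ∀ j ∈ t, 0 ≤ u j := by
        intro j hj
        simp only [hu]
        split_ifs with h
        · subst h
          rw [sub_nonneg]
          rw [div_le_iff₀ (by positivity)] at hwi
          nlinarith
        · rw [sub_zero]
          exact mul_nonneg (by positivity) (hw0 j hj)
      have husum : ∑ j ∈ t, u j = (d : ℝ) := by
        simp only [hu]
        rw [Finset.sum_sub_distrib, ← Finset.mul_sum, hw1, Finset.sum_ite_eq' t i (fun _ => (1:ℝ))]
        simp [hit]
      have hd0 : (0 : ℝ) < (d : ℝ) := by exact_mod_cast hd
      have hy : t.centerMass u id ∈ convexHull ℝ B :=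
        Finset.centerMass_mem_convexHull t hu0 (husum ▸ hd0) (fun j hj => hts hj)
      refine ⟨i, hts hit, (d : ℝ) • t.centerMass u id, ⟨_, hy, rfl⟩, ?_⟩
      -- algebra: i + d • centerMass u id = (d+1) • z
      rw [Finset.centerMass, husum, smul_smul, mul_inv_cancel₀ hd0.ne', one_smul]
      have hz' : ∑ j ∈ t, w j • j = z := by
        rw [← hwz, Finset.centerMass, hw1, inv_one, one_smul]
        simp only [id_eq]
      have hsum : ∑ j ∈ t, u j • id j = ((d : ℝ) + 1) • z - i := by
        simp only [hu, id_eq, sub_smul, ite_smul, one_smul, zero_smul, mul_smul]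
        rw [Finset.sum_sub_distrib, Finset.sum_ite_eq' t i, if_pos hit, ← Finset.smul_sum, hz']
      rw [hsum]
      module
end

section
/- Every point of (d+1)·CH(B) for B ⊆ ℝ^d can be written as b + c where b ∈ B and c ∈ d·CH(B). More precisely, if x ∈ ℝ^d satisfies (d+1)⁻¹·x ∈ CH(B), then there exist b ∈ B and c ∈ CH(B)·d with x = b + c. -/
open Pointwise

theorem mem_smul_convexHull_decompose (d : ℕ) (B : Set (Fin d → ℝ)) (x : Fin d → ℝ)
    (hx : ((d : ℝ) + 1)⁻¹ • x ∈ convexHull ℝ B) :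
    ∃ b ∈ B, ∃ c ∈ (d : ℝ) • convexHull ℝ B, x = b + c := by
  classical
  rcases Nat.eq_zero_or_pos d with hd | hd
  · subst hd
    obtain ⟨b, hb⟩ : B.Nonempty := by
      exact convexHull_nonempty_iff.mp ⟨_, hx⟩
    exact ⟨b, hb, _, Set.smul_mem_smul_set (a := ((0 : ℕ) : ℝ)) hx, Subsingleton.elim _ _⟩
  · have hd0 : (0 : ℝ) < (d : ℝ) := by exact_mod_cast hd
    obtain ⟨ι, _, z, w, hzB, hai, hw0, hw1, hwz⟩ :=
      eq_pos_convex_span_of_mem_convexHull hx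
    -- cardinality bound
    have hcard : (Fintype.card ι : ℝ) ≤ (d : ℝ) + 1 := by
      have h1 := hai.card_le_finrank_succ
      have h2 : Module.finrank ℝ (vectorSpan ℝ (Set.range z)) ≤ d := by
        have := Submodule.finrank_le (vectorSpan ℝ (Set.range z))
        simpa [Module.finrank_fin_fun] using this
      exact_mod_cast h1.trans (by omega)
    have hne : Nonempty ι := by
      by_contra h
      rw [not_nonempty_iff] at h
      simp [Finset.univ_eq_empty] at hw1
    -- pigeonhole: some weight is at least (d+1)⁻¹
    obtain ⟨i, -, hi⟩ : ∃ i ∈ Finset.univ, ((d : ℝ) + 1)⁻¹ ≤ w i := by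
      apply Finset.exists_le_of_sum_le Finset.univ_nonempty
      rw [hw1, Finset.sum_const, nsmul_eq_mul]
      rw [← Finset.card_univ] at hcard
      calc (Finset.univ.card : ℝ) * ((d : ℝ) + 1)⁻¹
          ≤ ((d : ℝ) + 1) * ((d : ℝ) + 1)⁻¹ := by
            apply mul_le_mul_of_nonneg_right hcard
            positivity
        _ = 1 := mul_inv_cancel₀ (by positivity)
    set μ : ι → ℝ := fun j => ((d : ℝ) + 1) * w j - if j = i then 1 else 0 with hμ
    have hμ0 : ∀ j, 0 ≤ μ j := by
      intro j
      by_cases hji : j = i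
      · subst hji
        have h1 : (1 : ℝ) ≤ ((d : ℝ) + 1) * w j :=
          calc (1 : ℝ) = ((d : ℝ) + 1) * ((d : ℝ) + 1)⁻¹ :=
                (mul_inv_cancel₀ (by positivity)).symm
            _ ≤ ((d : ℝ) + 1) * w j := mul_le_mul_of_nonneg_left hi (by positivity)
        have h2 : μ j = ((d : ℝ) + 1) * w j - 1 := by simp [hμ]
        rw [h2]; linarith
      · simp only [hμ, if_neg hji, sub_zero]
        exact mul_nonneg (by positivity) (hw0 j).le
    have hμsum : ∑ j, μ j = (d : ℝ) := by
      simp [hμ, Finset.sum_sub_distrib, ← Finset.mul_sum, hw1]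
    have hxsum : ∑ j, μ j • z j = x - z i := by
      have hx' : ∑ j, (((d : ℝ) + 1) * w j) • z j = x := by
        have : ((d : ℝ) + 1) • (((d : ℝ) + 1)⁻¹ • x) = x := by
          rw [smul_smul, mul_inv_cancel₀ (by positivity), one_smul]
        rw [← this, ← hwz, Finset.smul_sum]
        simp [smul_smul]
      calc ∑ j, μ j • z j
          = ∑ j, ((((d : ℝ) + 1) * w j) • z j - (if j = i then 1 else 0) • z j) := by
            simp [hμ, sub_smul]
        _ = x - z i := by
            rw [Finset.sum_sub_distrib, hx']
            congr 1
            simp [ite_smul]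
    refine ⟨z i, hzB ⟨i, rfl⟩, x - z i, ?_, by ring⟩
    refine ⟨Finset.univ.centerMass μ z, ?_, ?_⟩
    · exact Finset.univ.centerMass_mem_convexHull (fun j _ => hμ0 j)
        (by rw [hμsum]; exact hd0) (fun j _ => hzB ⟨j, rfl⟩)
    · simp only [Finset.centerMass, hμsum, smul_smul, mul_inv_cancel₀ hd0.ne', one_smul, hxsum]
end

section
/- Let S ⊆ E ⊆ ℝ^d with 0 ∉ CH(S). Then there exists a subset S' ⊆ E such that 0 ∉ CH(S ∪ S') and the linear span of S ∪ S' equals the linear span of E. -/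
lemma aux_zero_not_mem_insert {d : ℕ} (A : Set (Fin d → ℝ)) (e : Fin d → ℝ)
    (hA : (0 : Fin d → ℝ) ∉ convexHull ℝ A) (he : e ∉ Submodule.span ℝ A) :
    (0 : Fin d → ℝ) ∉ convexHull ℝ (insert e A) := by
  have he0 : e ≠ 0 := by
    rintro rfl; exact he (Submodule.zero_mem _)
  rcases A.eq_empty_or_nonempty with rfl | hne
  · intro h
    rw [show insert e (∅ : Set (Fin d → ℝ)) = {e} by ext x; simp, convexHull_singleton] at h
    exact he0 h.symm
  · rw [convexHull_insert hne]
    rintro h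
    rw [mem_convexJoin] at h
    obtain ⟨x, hx, y, hy, hseg⟩ := h
    obtain rfl : e = x := hx.symm
    obtain ⟨a, b, ha, hb, hab, hsum⟩ := hseg
    have hyspan : y ∈ Submodule.span ℝ A := by
      have : convexHull ℝ A ⊆ (Submodule.span ℝ A : Set (Fin d → ℝ)) :=
        convexHull_min Submodule.subset_span (Submodule.span ℝ A).convex
      exact this hy
    rcases eq_or_lt_of_le ha with h0a | h0a
    · have hb1 : b = 1 := by linarith
      have : y = 0 := by
        rw [← h0a, hb1] at hsum
        simpa using hsum
      exact hA (this ▸ hy)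
    · apply he
      have h1 : a • e = -(b • y) := by
        rw [eq_comm, neg_eq_iff_add_eq_zero, add_comm]; exact hsum
      have h2 : e = (-(a⁻¹ * b)) • y := by
        have h3 := congrArg (fun v => a⁻¹ • v) h1
        simp only [smul_smul, inv_mul_cancel₀ (ne_of_gt h0a), one_smul, smul_neg] at h3
        rw [h3, neg_smul]
      rw [h2]
      exact Submodule.smul_mem _ _ hyspan

lemma aux_extend {d : ℕ} (E : Set (Fin d → ℝ)) (k : ℕ) :
    ∀ A : Set (Fin d → ℝ), A ⊆ E → (0 : Fin d → ℝ) ∉ convexHull ℝ A →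
    d - Module.finrank ℝ (Submodule.span ℝ A) ≤ k →
    ∃ B, A ⊆ B ∧ B ⊆ E ∧ (0 : Fin d → ℝ) ∉ convexHull ℝ B ∧
      Submodule.span ℝ B = Submodule.span ℝ E := by
  induction k with
  | zero =>
    intro A hAE hA hk
    have hle : Module.finrank ℝ (Submodule.span ℝ A) ≤ d := by
      simpa using Submodule.finrank_le (Submodule.span ℝ A)
    have heq : Module.finrank ℝ (Submodule.span ℝ A) = d := by omega
    have htop : Submodule.span ℝ A = ⊤ := by
      apply Submodule.eq_top_of_finrank_eq
      simpa using heq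
    refine ⟨A, subset_rfl, hAE, hA, ?_⟩
    rw [htop]
    exact (le_antisymm le_top (htop ▸ Submodule.span_mono hAE)).symm ▸ rfl
  | succ n ih =>
    intro A hAE hA hk
    by_cases hE : E ⊆ (Submodule.span ℝ A : Set (Fin d → ℝ))
    · exact ⟨A, subset_rfl, hAE, hA,
        le_antisymm (Submodule.span_mono hAE) (Submodule.span_le.mpr hE)⟩
    · rw [Set.not_subset] at hE
      obtain ⟨e, heE, heA⟩ := hE
      have hlt : Submodule.span ℝ A < Submodule.span ℝ (insert e A) := by
        refine lt_of_le_of_ne (Submodule.span_mono (Set.subset_insert e A)) ?_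
        intro h
        exact heA (h ▸ Submodule.subset_span (Set.mem_insert e A))
      have hrank : Module.finrank ℝ (Submodule.span ℝ A) <
          Module.finrank ℝ (Submodule.span ℝ (insert e A)) :=
        Submodule.finrank_lt_finrank_of_lt hlt
      obtain ⟨B, h1, h2, h3, h4⟩ := ih (insert e A) (Set.insert_subset heE hAE)
        (aux_zero_not_mem_insert A e hA heA) (by omega)
      exact ⟨B, (Set.subset_insert e A).trans h1, h2, h3, h4⟩

theorem exists_extension_keeping_zero_outside_convexHull (d : ℕ)
    (S E : Set (Fin d → ℝ)) (hSE : S ⊆ E) (h0 : (0 : Fin d → ℝ) ∉ convexHull ℝ S) :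
    ∃ S' ⊆ E, (0 : Fin d → ℝ) ∉ convexHull ℝ (S ∪ S') ∧
      Submodule.span ℝ (S ∪ S') = Submodule.span ℝ E := by
  obtain ⟨B, hSB, hBE, hB0, hBspan⟩ := aux_extend E d S hSE h0 (Nat.sub_le _ _)
  refine ⟨B, hBE, ?_, ?_⟩ <;> rw [Set.union_eq_self_of_subset_left hSB] <;> assumption
end

section
/- Let B ⊆ ℝ^d be compact and convex, let A₁,…,Aₙ ⊆ ℝ^d, and suppose there exist aᵢ ∈ CH(closure(Aᵢ)) for i ≤ n such that 0 ∉ CH{a₁,…,aₙ} + B. Then there exist a'ᵢ ∈ Aᵢ such that 0 ∉ CH{a'₁,…,a'ₙ} + B. -/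
open Pointwise

theorem exists_points_in_moves_zero_notin_convexHull_add (d n : ℕ)
    (B : Set (Fin d → ℝ)) (hBc : IsCompact B) (hBconv : Convex ℝ B)
    (A : Fin n → Set (Fin d → ℝ)) (a : Fin n → (Fin d → ℝ))
    (ha : ∀ i, a i ∈ convexHull ℝ (closure (A i)))
    (h0 : (0 : Fin d → ℝ) ∉ convexHull ℝ (Set.range a) + B) :
    ∃ a' : Fin n → (Fin d → ℝ), (∀ i, a' i ∈ A i) ∧
      (0 : Fin d → ℝ) ∉ convexHull ℝ (Set.range a') + B := by
  -- each A i is nonempty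
  have hAne : ∀ i, (A i).Nonempty := by
    intro i
    by_contra h
    rw [Set.not_nonempty_iff_eq_empty] at h
    have := ha i
    rw [h, closure_empty, convexHull_empty] at this
    exact this
  rcases Set.eq_empty_or_nonempty B with hB | hBne
  · -- B empty: sum is empty
    refine ⟨fun i => (hAne i).choose, fun i => (hAne i).choose_spec, ?_⟩
    rw [hB, Set.add_empty]
    exact Set.notMem_empty _
  · -- separate 0 from the compact convex set CH(range a) + B
    have hK : IsCompact (convexHull ℝ (Set.range a)) :=
      (Set.finite_range a).isCompact_convexHull (𝕜 := ℝ)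
    have hKB : IsCompact (convexHull ℝ (Set.range a) + B) := hK.add hBc
    obtain ⟨f, u, hfu, hsep⟩ :=
      geometric_hahn_banach_point_closed
        ((convex_convexHull ℝ (Set.range a)).add hBconv) hKB.isClosed h0
    -- minimum of f on B
    obtain ⟨b₀, hb₀B, hb₀min⟩ := hBc.exists_isMinOn hBne f.continuous.continuousOn
    have hfa : ∀ i, u - f b₀ < f (a i) := by
      intro i
      have : u < f (a i + b₀) := hsep _ (Set.add_mem_add
        (subset_convexHull ℝ _ ⟨i, rfl⟩) hb₀B)
      rw [map_add] at this
      linarith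
    -- find a' i ∈ A i with f (a' i) > u - f b₀
    have key : ∀ i, ∃ x ∈ A i, u - f b₀ < f x := by
      intro i
      by_contra h
      push_neg at h
      have hsub : A i ⊆ f ⁻¹' Set.Iic (u - f b₀) := fun x hx => h x hx
      have hclosed : IsClosed (f ⁻¹' Set.Iic (u - f b₀)) :=
        isClosed_Iic.preimage f.continuous
      have hconv : Convex ℝ (f ⁻¹' Set.Iic (u - f b₀)) :=
        (convex_Iic _).linear_preimage (f : (Fin d → ℝ) →ₗ[ℝ] ℝ)
      have : convexHull ℝ (closure (A i)) ⊆ f ⁻¹' Set.Iic (u - f b₀) :=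
        convexHull_min (closure_minimal hsub hclosed) hconv
      have := this (ha i)
      have := hfa i
      simp only [Set.mem_preimage, Set.mem_Iic] at *
      linarith
    choose a' ha'A ha'f using key
    refine ⟨a', ha'A, ?_⟩
    intro hmem
    rw [Set.mem_add] at hmem
    obtain ⟨x, hx, b, hb, hxb⟩ := hmem
    have hx' : x ∈ f ⁻¹' Set.Ioi (u - f b₀) := by
      refine convexHull_min ?_ ((convex_Ioi _).linear_preimage
        (f : (Fin d → ℝ) →ₗ[ℝ] ℝ)) hx
      rintro y ⟨i, rfl⟩
      exact ha'f i
    have h1 : u - f b₀ < f x := hx'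
    have h2 : f b₀ ≤ f b := hb₀min hb
    have h3 : f 0 < u := hfu
    have h4 : f (x + b) = f x + f b := map_add f x b
    rw [hxb] at h4
    rw [map_zero] at h3 h4
    linarith
end

section
/- Let W ⊆ T ⊆ ℝ^d with T bounded and convex and W nonempty, and suppose that for every t ∈ ℝ^d, if t + W ⊆ T then t + W ⊆ W. Then for every t ∈ ℝ^d \ {0}, the translate t + W intersects the complement of T: (t + W) ∩ (ℝ^d \ T) ≠ ∅. -/
theorem translate_winning_region_leaves_safe (d : ℕ) (W T : Set (Fin d → ℝ))
    (hWT : W ⊆ T) (hTb : Bornology.IsBounded T) (hTconv : Convex ℝ T)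
    (hWne : W.Nonempty)
    (h : ∀ t : Fin d → ℝ, (t + ·) '' W ⊆ T → (t + ·) '' W ⊆ W) :
    ∀ t : Fin d → ℝ, t ≠ 0 → ((t + ·) '' W ∩ Tᶜ).Nonempty := by
  intro t ht
  by_contra hc
  rw [Set.not_nonempty_iff_eq_empty, ← Set.disjoint_iff_inter_eq_empty,
    Set.disjoint_compl_right_iff_subset] at hc
  have hW := h t hc
  obtain ⟨w, hw⟩ := hWne
  have key : ∀ n : ℕ, (n : ℝ) • t + w ∈ W := by
    intro n
    induction n with
    | zero => simpa using hw
    | succ n ih =>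
      have : t + ((n : ℝ) • t + w) ∈ W := hW ⟨_, ih, rfl⟩
      have e : ((n + 1 : ℕ) : ℝ) • t + w = t + ((n : ℝ) • t + w) := by
        push_cast; module
      rw [e]; exact this
  obtain ⟨C, hC⟩ := hTb.exists_norm_le
  have hlt : ∀ n : ℕ, (n : ℝ) * ‖t‖ - ‖w‖ ≤ C := by
    intro n
    have hT : (n : ℝ) • t + w ∈ T := hWT (key n)
    have := hC _ hT
    have h1 : ‖(n : ℝ) • t‖ - ‖w‖ ≤ ‖(n : ℝ) • t + w‖ := by
      have := norm_add_le ((n : ℝ) • t + w) (-w)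
      simp at this
      linarith [this]
    rw [norm_smul] at h1
    simp at h1
    linarith
  have htpos : 0 < ‖t‖ := norm_pos_iff.mpr ht
  obtain ⟨n, hn⟩ := exists_nat_gt ((C + ‖w‖) / ‖t‖)
  have := hlt n
  have : (C + ‖w‖) / ‖t‖ * ‖t‖ < (n : ℝ) * ‖t‖ := by
    exact mul_lt_mul_of_pos_right hn htpos
  rw [div_mul_cancel₀ _ htpos.ne'] at this
  linarith
end

section
/- In the d-dimensional +1/−1-game, Player A has a winning strategy for threshold −d: Player A can choose positions n₀, n₁, … ∈ {1,…,d} (responding after seeing the history of stochastic vectors played so far) such that against every sequence v₀, v₁, … of stochastic vectors (vᵢ ∈ [0,1]^d with coordinates summing to 1, with vᵢ chosen after nᵢ), for all j ∈ ℕ and all k ∈ {1,…,d}: |{i ≤ j : nᵢ = k}| − Σ_{i=0}^{j} (vᵢ)_k ≥ −d. -/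
/-- Player A's strategy: pick the coordinate with the largest "deficit"
`(sum of v's so far) - (number of times picked so far)`. -/
noncomputable def strat (d : ℕ) [NeZero d] : (j : ℕ) → (Fin j → (Fin d → ℝ)) → Fin d
  | j, h =>
    (Finset.exists_max_image (Finset.univ : Finset (Fin d))
      (fun k : Fin d =>
        (∑ i : Fin j, h i k) -
          (((Finset.range j).filter (fun i =>
            ∃ hi : i < j, strat d i (fun t => h ⟨t, t.2.trans hi⟩) = k)).card : ℝ))
      ⟨⟨0, Nat.pos_of_ne_zero (NeZero.ne d)⟩, Finset.mem_univ _⟩).choose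
termination_by j _ => j
decreasing_by all_goals assumption

lemma choose_max {α β : Type*} [LinearOrder α] {s : Finset β} {f : β → α}
    (ex : ∃ x ∈ s, ∀ y ∈ s, f y ≤ f x) {k : β} (hk : k ∈ s) : f k ≤ f ex.choose :=
  ex.choose_spec.2 k hk

/-- The strategy indeed picks a coordinate with maximal deficit. -/
lemma strat_spec (d : ℕ) [NeZero d] (j : ℕ) (h : Fin j → (Fin d → ℝ)) (k : Fin d) :
    (∑ i : Fin j, h i k) - (((Finset.range j).filter (fun i =>
        ∃ hi : i < j, strat d i (fun t => h ⟨t, t.2.trans hi⟩) = k)).card : ℝ)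
      ≤ (∑ i : Fin j, h i (strat d j h)) - (((Finset.range j).filter (fun i =>
        ∃ hi : i < j, strat d i (fun t => h ⟨t, t.2.trans hi⟩) = strat d j h)).card : ℝ) := by
  conv_rhs => rw [strat.eq_1]
  exact choose_max (s := (Finset.univ : Finset (Fin d)))
    (f := fun k : Fin d =>
      (∑ i : Fin j, h i k) -
        (((Finset.range j).filter (fun i =>
          ∃ hi : i < j, strat d i (fun t => h ⟨t, t.2.trans hi⟩) = k)).card : ℝ))
    _ (Finset.mem_univ k)

theorem playerA_wins_plus_minus_one_game (d : ℕ) (hd : 1 ≤ d) :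
    ∃ σ : (∀ j : ℕ, (Fin j → (Fin d → ℝ)) → Fin d),
      ∀ v : ℕ → (Fin d → ℝ),
        (∀ i, (∀ k, 0 ≤ v i k) ∧ ∑ k, v i k = 1) →
        ∀ j : ℕ, ∀ k : Fin d,
          ((Finset.range (j + 1)).filter
              (fun i => σ i (fun t : Fin i => v t) = k)).card -
            ∑ i ∈ Finset.range (j + 1), v i k ≥ -(d : ℝ) := by
  haveI : NeZero d := ⟨by omega⟩
  refine ⟨strat d, ?_⟩
  intro v hv
  -- `pick i` : the coordinate chosen in round `i`.
  set pick : ℕ → Fin d := fun i => strat d i (fun t : Fin i => v t) with hpick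
  -- `E n k` : deficit of coordinate `k` after `n` rounds.
  set E : ℕ → Fin d → ℝ := fun n k =>
    (∑ i ∈ Finset.range n, v i k) -
      ((Finset.range n).filter (fun i => pick i = k)).card with hE
  -- The strategy picks a coordinate with maximal deficit.
  have hmax : ∀ n k, E n k ≤ E n (pick n) := by
    intro n k
    have hs := strat_spec d n (fun t : Fin n => v t)
    have key : ∀ k : Fin d,
        (∑ i : Fin n, (fun t : Fin n => v (t : ℕ)) i k) -
          (((Finset.range n).filter (fun i =>
            ∃ hi : i < n, strat d i (fun t => (fun t : Fin n => v (t : ℕ)) ⟨t, t.2.trans hi⟩) = k)).card : ℝ)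
        = E n k := by
      intro k
      have h1 : (∑ i : Fin n, (fun t : Fin n => v (t : ℕ)) i k) = ∑ i ∈ Finset.range n, v i k := by
        simpa using Fin.sum_univ_eq_sum_range (fun i => v i k) n
      have h2 : ((Finset.range n).filter (fun i =>
            ∃ hi : i < n, strat d i (fun t => (fun t : Fin n => v (t : ℕ)) ⟨t, t.2.trans hi⟩) = k))
          = ((Finset.range n).filter (fun i => pick i = k)) := by
        apply Finset.filter_congr
        intro i hi
        simp only [Finset.mem_range] at hi
        constructor
        · rintro ⟨_, h⟩; exact h
        · intro h; exact ⟨hi, h⟩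
      rw [hE]
      simp only [h1, h2]
    have := hs k
    rw [key k, key (strat d n (fun t : Fin n => v t))] at this
    exact this
  -- The key invariant: for every subset `S`, `∑_{k ∈ S} E n k ≤ d - |S|`.
  have inv : ∀ n : ℕ, ∀ S : Finset (Fin d), ∑ k ∈ S, E n k ≤ (d : ℝ) - S.card := by
    intro n
    induction n with
    | zero =>
      intro S
      have hc : S.card ≤ d := by simpa using Finset.card_le_univ S
      simp only [hE, Finset.range_zero, Finset.sum_empty, Finset.filter_empty,
        Finset.card_empty, Nat.cast_zero, sub_zero, Finset.sum_const_zero]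
      have : (S.card : ℝ) ≤ d := by exact_mod_cast hc
      linarith
    | succ n ih =>
      intro S
      have hstep : ∀ k, E (n + 1) k = E n k + v n k - (if pick n = k then 1 else 0) := by
        intro k
        rw [hE]
        simp only
        rw [Finset.sum_range_succ, Finset.range_add_one, Finset.filter_insert]
        by_cases h : pick n = k
        · rw [if_pos h, Finset.card_insert_of_notMem (by simp), if_pos h]
          push_cast
          ring
        · rw [if_neg h, if_neg h]
          ring
      have hsum : ∑ k ∈ S, E (n + 1) k
          = ∑ k ∈ S, E n k + ∑ k ∈ S, v n k - (if pick n ∈ S then 1 else 0) := by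
        simp only [hstep]
        rw [Finset.sum_sub_distrib, Finset.sum_add_distrib, Finset.sum_ite_eq]
      have hvsum : ∑ k ∈ S, v n k ≤ 1 := by
        have h1 : ∑ k ∈ S, v n k ≤ ∑ k, v n k :=
          Finset.sum_le_sum_of_subset_of_nonneg (Finset.subset_univ S)
            (fun k _ _ => (hv n).1 k)
        rw [(hv n).2] at h1
        exact h1
      by_cases hmem : pick n ∈ S
      · rw [hsum, if_pos hmem]
        have := ih S
        linarith
      · rw [hsum, if_neg hmem]
        have hS' : ∑ k ∈ S, E n k ≤ (d : ℝ) - S.card - 1 := by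
          have hins := ih (insert (pick n) S)
          rw [Finset.sum_insert hmem, Finset.card_insert_of_notMem hmem] at hins
          push_cast at hins
          by_cases hpos : 0 ≤ E n (pick n)
          · linarith
          · have hle : ∑ k ∈ S, E n k ≤ 0 :=
              Finset.sum_nonpos fun k _ => le_trans (hmax n k) (le_of_not_ge hpos)
            have hcard : (insert (pick n) S).card ≤ d := by
              simpa using Finset.card_le_univ (insert (pick n) S)
            rw [Finset.card_insert_of_notMem hmem] at hcard
            have : (S.card : ℝ) + 1 ≤ d := by exact_mod_cast hcard
            linarith
        linarith
  -- Conclude from the invariant with a singleton set.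
  intro j k
  have hinv := inv (j + 1) {k}
  simp only [Finset.sum_singleton, Finset.card_singleton, Nat.cast_one] at hinv
  rw [hE] at hinv
  simp only at hinv
  have hd1 : (1 : ℝ) ≤ d := by exact_mod_cast hd
  rw [ge_iff_le, neg_le_sub_iff_le_add]
  rw [hpick] at hinv
  linarith
end

section
/- In the d-dimensional +1/−1-game, Player B can force some coordinate below −H(d−1): there is a sequence of stochastic vectors (depending on Player A's choices) such that for every sequence of positions n₀,…,n_{d−2} ∈ {1,…,d} chosen by Player A, there is some round j ≤ d−2 and coordinate k with |{i ≤ j : nᵢ = k}| − Σ_{i=0}^{j} (vᵢ)_k ≤ −H(d−1), where H(m) = Σ_{i=1}^{m} 1/i is the m-th harmonic number. Concretely: if in round r (0-indexed, r < d−1) Player B distributes weight 1/(d−r) uniformly over d−r positions that Player A has never played in rounds 0 through r, then after round d−2 the position never played by Player A has accumulated value −H(d−1). -/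
open Finset

theorem topCard {α : Type*} [LinearOrder α] [DecidableEq α] (U : Finset α) (m : ℕ)
    (hm : m ≤ U.card) :
    (U.filter fun x => (U.filter fun y => x ≤ y).card ≤ m).card = m := by
  set g : α → ℕ := fun x => (U.filter fun y => x ≤ y).card with hg
  have hanti : ∀ x ∈ U, ∀ x' ∈ U, x < x' → g x' < g x := by
    intro x hx x' hx' hlt
    apply Finset.card_lt_card
    constructor
    · intro y hy
      simp only [mem_filter] at hy ⊢
      exact ⟨hy.1, le_trans hlt.le hy.2⟩
    · intro hsub
      have : x ∈ U.filter fun y => x' ≤ y := hsub (by simp [hx])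
      simp only [mem_filter] at this
      exact absurd this.2 (not_le.mpr hlt)
  have hinj : Set.InjOn g U := by
    intro x hx x' hx' he
    rcases lt_trichotomy x x' with h | h | h
    · exact absurd he (Nat.ne_of_gt (hanti x hx x' hx' h))
    · exact h
    · exact absurd he (Nat.ne_of_lt (hanti x' hx' x hx h))
  have himg : U.image g = Finset.Icc 1 U.card := by
    apply Finset.eq_of_subset_of_card_le
    · intro v hv
      simp only [mem_image] at hv
      obtain ⟨x, hx, rfl⟩ := hv
      simp only [Finset.mem_Icc]
      constructor
      · have : x ∈ U.filter fun y => x ≤ y := by simp [hx]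
        exact Finset.card_pos.mpr ⟨x, this⟩
      · exact Finset.card_filter_le _ _
    · rw [Nat.card_Icc, Finset.card_image_of_injOn hinj]
      omega
  have key : (U.filter fun x => g x ≤ m).image g = (U.image g).filter (fun v => v ≤ m) := by
    ext v
    simp only [Finset.mem_image, Finset.mem_filter]
    constructor
    · rintro ⟨x, ⟨hx, hxm⟩, rfl⟩; exact ⟨⟨x, hx, rfl⟩, hxm⟩
    · rintro ⟨⟨x, hx, rfl⟩, hxm⟩; exact ⟨x, ⟨hx, hxm⟩, rfl⟩
  have : ((U.filter fun x => g x ≤ m)).card = ((U.image g).filter (fun v => v ≤ m)).card := by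
    rw [← key, Finset.card_image_of_injOn (hinj.mono (Finset.filter_subset _ _))]
  rw [this, himg]
  have : (Finset.Icc 1 U.card).filter (fun v => v ≤ m) = Finset.Icc 1 m := by
    ext v; simp only [mem_filter, Finset.mem_Icc]; omega
  rw [this, Nat.card_Icc]; omega

theorem playerB_forces_harmonic_threshold (d : ℕ) (hd : 1 ≤ d) :
    ∃ τ : (∀ r : ℕ, (Fin (r + 1) → Fin d) → (Fin d → ℝ)),
      (∀ r f, (∀ k, 0 ≤ τ r f k) ∧ ∑ k, τ r f k = 1) ∧
      ∀ n : ℕ → Fin d, ∃ j ≤ d - 2, ∃ k : Fin d,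
        (((Finset.range (j + 1)).filter (fun i => n i = k)).card : ℝ) -
            ∑ i ∈ Finset.range (j + 1), τ i (fun t : Fin (i + 1) => n t) k ≤
          -(∑ i ∈ Finset.range (d - 1), (1 : ℝ) / (i + 1)) := by
  classical
  -- the unplayed set
  set Uf : ∀ r : ℕ, (Fin (r + 1) → Fin d) → Finset (Fin d) :=
    fun r f => Finset.univ.filter (fun k => ∀ t, f t ≠ k) with hUf
  have hUcard : ∀ (r : ℕ) (f : Fin (r + 1) → Fin d), d - (r + 1) ≤ (Uf r f).card := by
    intro r f
    have h1 : Uf r f = (Finset.image f Finset.univ)ᶜ := by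
      ext k; simp [hUf, eq_comm]
    rw [h1, Finset.card_compl]
    have := Finset.card_image_le (f := f) (s := Finset.univ)
    simp only [Finset.card_univ, Fintype.card_fin] at this ⊢
    omega
  set T : ∀ r : ℕ, (Fin (r + 1) → Fin d) → Finset (Fin d) :=
    fun r f => (Uf r f).filter
      (fun x => ((Uf r f).filter (fun y => x ≤ y)).card ≤ d - 1 - r) with hT
  have hTcard : ∀ (r : ℕ) (f : Fin (r + 1) → Fin d), r + 1 < d → (T r f).card = d - 1 - r := by
    intro r f hr
    exact topCard _ _ (le_trans (by omega) (hUcard r f))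
  refine ⟨fun r f k => if r + 1 < d then
      (if k ∈ T r f then ((d - 1 - r : ℕ) : ℝ)⁻¹ else 0) else ((d : ℕ) : ℝ)⁻¹, ?_, ?_⟩
  · intro r f
    constructor
    · intro k
      by_cases hr : r + 1 < d <;> simp [hr] <;> positivity
    · by_cases hr : r + 1 < d
      · simp only [hr, if_true]
        rw [Finset.sum_ite_mem, Finset.univ_inter, Finset.sum_const, hTcard r f hr,
          nsmul_eq_mul]
        rw [mul_inv_cancel₀]
        exact Nat.cast_ne_zero.mpr (by omega)
      · simp only [hr, if_false]
        rw [Finset.sum_const, Finset.card_univ, Fintype.card_fin, nsmul_eq_mul]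
        rw [mul_inv_cancel₀]
        exact Nat.cast_ne_zero.mpr (by omega)
  · intro n
    by_cases hd2 : d = 1
    · subst hd2
      refine ⟨0, by omega, 0, ?_⟩
      simp only [Subsingleton.elim (n 0) 0]
      simp only [Nat.lt_irrefl, if_false, Nat.cast_one, Finset.sum_range_one]
      norm_num
      exact le_trans (Finset.card_filter_le _ _) (by simp)
    have hd2' : 2 ≤ d := by omega
    -- the unplayed set after rounds 0..r, for the actual play n
    have hUne : (Uf (d - 2) (fun t => n t)).Nonempty := by
      rw [← Finset.card_pos]
      have := hUcard (d - 2) (fun t => n t)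
      omega
    set k : Fin d := (Uf (d - 2) (fun t => n t)).max' hUne with hk
    have hkU : ∀ i : ℕ, i < d - 1 → n i ≠ k := by
      intro i hi
      have hkmem : k ∈ Uf (d - 2) (fun t => n t) := Finset.max'_mem _ hUne
      exact (Finset.mem_filter.mp hkmem).2 ⟨i, by omega⟩
    refine ⟨d - 2, le_refl _, k, ?_⟩
    have hdd : d - 2 + 1 = d - 1 := by omega
    rw [hdd]
    -- the count is 0
    have hcount : ((Finset.range (d - 1)).filter (fun i => n i = k)).card = 0 := by
      rw [Finset.card_eq_zero, Finset.filter_eq_empty_iff]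
      intro i hi
      exact hkU i (Finset.mem_range.mp hi)
    rw [hcount]
    -- each τ value is (d-1-i)⁻¹
    have hτ : ∀ i ∈ Finset.range (d - 1),
        (if i + 1 < d then
          (if k ∈ T i (fun t : Fin (i + 1) => n t) then ((d - 1 - i : ℕ) : ℝ)⁻¹ else 0)
          else ((d : ℕ) : ℝ)⁻¹) = ((d - 1 - i : ℕ) : ℝ)⁻¹ := by
      intro i hi
      rw [Finset.mem_range] at hi
      have h1 : i + 1 < d := by omega
      rw [if_pos h1, if_pos]
      rw [hT, Finset.mem_filter]
      have hkUi : k ∈ Uf i (fun t : Fin (i + 1) => n t) := by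
        rw [hUf]
        simp only [Finset.mem_filter, Finset.mem_univ, true_and]
        intro t
        exact fun h => hkU t (by omega) h
      refine ⟨hkUi, ?_⟩
      -- rank bound
      have hsub : (Uf i (fun t : Fin (i + 1) => n t)).filter (fun y => k ≤ y) ⊆
          insert k ((Finset.Ico (i + 1) (d - 1)).image n) := by
        intro y hy
        simp only [Finset.mem_filter, hUf, Finset.mem_univ, true_and] at hy
        obtain ⟨hyU, hky⟩ := hy
        rcases eq_or_lt_of_le hky with h | h
        · simp [← h]
        · -- y > k, so y must be played at some round in [i+1, d-1)
          by_cases hyp : ∃ t : ℕ, t < d - 1 ∧ n t = y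
          · obtain ⟨t, ht, hnt⟩ := hyp
            have hti : i + 1 ≤ t := by
              by_contra hc
              exact hyU ⟨t, by omega⟩ hnt
            simp only [Finset.mem_insert, Finset.mem_image, Finset.mem_Ico]
            exact Or.inr ⟨t, ⟨hti, ht⟩, hnt⟩
          · exfalso
            push_neg at hyp
            have hyU2 : y ∈ Uf (d - 2) (fun t => n t) := by
              rw [hUf]
              simp only [Finset.mem_filter, Finset.mem_univ, true_and]
              intro t ht
              exact hyp t (by omega) ht
            have := Finset.le_max' _ y hyU2
            rw [← hk] at this
            omega
      calc ((Uf i (fun t : Fin (i + 1) => n t)).filter (fun y => k ≤ y)).card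
          ≤ (insert k ((Finset.Ico (i + 1) (d - 1)).image n)).card :=
            Finset.card_le_card hsub
        _ ≤ ((Finset.Ico (i + 1) (d - 1)).image n).card + 1 := Finset.card_insert_le _ _
        _ ≤ (Finset.Ico (i + 1) (d - 1)).card + 1 := by
            exact Nat.add_le_add_right (Finset.card_image_le) 1
        _ ≤ d - 1 - i := by rw [Nat.card_Ico]; omega
    rw [Finset.sum_congr rfl hτ]
    -- reindex the sum
    have hre : ∑ i ∈ Finset.range (d - 1), ((d - 1 - i : ℕ) : ℝ)⁻¹ =
        ∑ i ∈ Finset.range (d - 1), (1 : ℝ) / (i + 1) := by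
      rw [← Finset.sum_range_reflect (fun i => (1 : ℝ) / (i + 1)) (d - 1)]
      apply Finset.sum_congr rfl
      intro i hi
      rw [Finset.mem_range] at hi
      have h2 : (d - 1 - 1 - i : ℕ) + 1 = d - 1 - i := by omega
      rw [one_div, ← h2]
      push_cast
      ring
    rw [hre]
    simp
end

section
/- Convex approximation bound: Let B ⊆ ℝ^d, fix c ∈ d·CH(B), and suppose a point s ∈ ℝ^d satisfies s ∈ d·CH(B) − c (i.e., s + c ∈ d·CH(B)). Then for every v ∈ CH(B) there exists u ∈ B such that s + v − u ∈ d·CH(B) − c. Consequently, Player A wins the convex approximation game for B with error margin d·CH(B) + {−c}: for any sequence v₀, v₁, … ∈ CH(B) there exist u₀, u₁, … ∈ B (each uⱼ depending only on v₀,…,vⱼ) such that for all j, Σ_{i=0}^{j} (vᵢ − uᵢ) ∈ d·CH(B) + {−c}. -/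
open Pointwise

private lemma carath_step {d : ℕ} (hd : 0 < d) {B : Set (Fin d → ℝ)} {x : Fin d → ℝ}
    (hx : x ∈ convexHull ℝ B) :
    ∃ u ∈ B, ∃ y ∈ convexHull ℝ B, ((d : ℝ) + 1) • x = u + (d : ℝ) • y := by
  classical
  obtain ⟨ι, hι, z, w, hzB, hai, hw0, hw1, hwx⟩ := eq_pos_convex_span_of_mem_convexHull hx
  have hd1 : (0 : ℝ) < (d : ℝ) + 1 := by positivity
  have hcard : Fintype.card ι ≤ d + 1 := by
    calc Fintype.card ι ≤ Module.finrank ℝ (vectorSpan ℝ (Set.range z)) + 1 :=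
          hai.card_le_finrank_succ
      _ ≤ Module.finrank ℝ (Fin d → ℝ) + 1 :=
          Nat.add_le_add_right (Submodule.finrank_le _) 1
      _ = d + 1 := by rw [Module.finrank_fin_fun]
  have hne : Nonempty ι := by
    rcases isEmpty_or_nonempty ι with h | h
    · rw [Finset.univ_eq_empty, Finset.sum_empty] at hw1
      exact absurd hw1 zero_ne_one
    · exact h
  -- find an index with large weight
  have hsum : ∑ _i : ι, ((d : ℝ) + 1)⁻¹ ≤ ∑ i : ι, w i := by
    rw [hw1, Finset.sum_const, Finset.card_univ, nsmul_eq_mul]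
    calc (Fintype.card ι : ℝ) * ((d : ℝ) + 1)⁻¹
        ≤ ((d : ℝ) + 1) * ((d : ℝ) + 1)⁻¹ := by
          apply mul_le_mul_of_nonneg_right _ (by positivity)
          exact_mod_cast hcard
      _ = 1 := mul_inv_cancel₀ (ne_of_gt hd1)
  obtain ⟨k, -, hk⟩ := Finset.exists_le_of_sum_le Finset.univ_nonempty hsum
  set μ : ι → ℝ := fun i => ((d : ℝ) + 1) * w i - (if i = k then 1 else 0) with hμ
  have hμ0 : ∀ i ∈ Finset.univ, 0 ≤ μ i := by
    intro i _
    rcases eq_or_ne i k with rfl | h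
    · simp only [hμ, if_pos rfl, sub_nonneg]
      calc (1 : ℝ) = ((d : ℝ) + 1) * ((d : ℝ) + 1)⁻¹ := (mul_inv_cancel₀ (ne_of_gt hd1)).symm
        _ ≤ ((d : ℝ) + 1) * w i := mul_le_mul_of_nonneg_left hk (le_of_lt hd1)
    · simp only [hμ, if_neg h, sub_zero]
      exact mul_nonneg (le_of_lt hd1) (le_of_lt (hw0 i))
  have hμsum : ∑ i : ι, μ i = (d : ℝ) := by
    simp only [hμ, Finset.sum_sub_distrib, ← Finset.mul_sum, hw1, mul_one]
    rw [Finset.sum_ite_eq' Finset.univ k (fun _ => (1 : ℝ)), if_pos (Finset.mem_univ k)]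
    ring
  have hμz : ∑ i : ι, μ i • z i = ((d : ℝ) + 1) • x - z k := by
    simp only [hμ, sub_smul, Finset.sum_sub_distrib, mul_smul, ← Finset.smul_sum, hwx,
      ite_smul, one_smul, zero_smul]
    rw [Finset.sum_ite_eq' Finset.univ k z, if_pos (Finset.mem_univ k)]
  have hdR : (0 : ℝ) < (d : ℝ) := by exact_mod_cast hd
  set y := Finset.univ.centerMass μ z with hy
  have hyB : y ∈ convexHull ℝ B := by
    apply Finset.centerMass_mem_convexHull _ hμ0 (by rw [hμsum]; exact hdR)
    intro i _
    exact hzB ⟨i, rfl⟩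
  refine ⟨z k, hzB ⟨k, rfl⟩, y, hyB, ?_⟩
  have : (d : ℝ) • y = ((d : ℝ) + 1) • x - z k := by
    rw [hy, Finset.centerMass, hμsum, hμz, smul_smul, mul_inv_cancel₀ (ne_of_gt hdR), one_smul]
  rw [this]
  abel

private lemma step_lemma (d : ℕ) (B : Set (Fin d → ℝ)) (s c v : Fin d → ℝ)
    (hs : s + c ∈ (d : ℝ) • convexHull ℝ B) (hv : v ∈ convexHull ℝ B) :
    ∃ u ∈ B, (s + v - u) + c ∈ (d : ℝ) • convexHull ℝ B := by
  rcases Nat.eq_zero_or_pos d with rfl | hd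
  · obtain ⟨u, hu⟩ : B.Nonempty := by
      rw [← convexHull_nonempty_iff (𝕜 := ℝ)]
      obtain ⟨y, hy, -⟩ := Set.mem_smul_set.mp hs
      exact ⟨y, hy⟩
    refine ⟨u, hu, ?_⟩
    have : (s + v - u) + c = s + c := Subsingleton.elim _ _
    rwa [this]
  · obtain ⟨y₀, hy₀, hy₀eq⟩ := Set.mem_smul_set.mp hs
    have hd1 : (0 : ℝ) < (d : ℝ) + 1 := by positivity
    have ha : (0 : ℝ) ≤ (d : ℝ) / ((d : ℝ) + 1) := by positivity
    have hb : (0 : ℝ) ≤ 1 / ((d : ℝ) + 1) := by positivity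
    have hab : (d : ℝ) / ((d : ℝ) + 1) + 1 / ((d : ℝ) + 1) = 1 := by
      field_simp
    have hx : ((d : ℝ) / ((d : ℝ) + 1)) • y₀ + (1 / ((d : ℝ) + 1)) • v ∈ convexHull ℝ B :=
      (convex_convexHull ℝ B) hy₀ hv ha hb hab
    obtain ⟨u, huB, y, hyB, heq⟩ := carath_step hd hx
    have h1 : ((d : ℝ) + 1) • (((d : ℝ) / ((d : ℝ) + 1)) • y₀ + (1 / ((d : ℝ) + 1)) • v)
        = (d : ℝ) • y₀ + v := by
      rw [smul_add, smul_smul, smul_smul, mul_div_cancel₀ _ (ne_of_gt hd1)]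
      congr 1
      rw [mul_one_div, div_self (ne_of_gt hd1), one_smul]
    rw [h1, hy₀eq] at heq
    refine ⟨u, huB, Set.mem_smul_set.mpr ⟨y, hyB, ?_⟩⟩
    have : (d : ℝ) • y = (s + c + v) - u := by
      rw [eq_sub_iff_add_eq, heq]; abel
    rw [this]; abel

open Classical in
noncomputable def pick (d : ℕ) (B : Set (Fin d → ℝ)) (c : Fin d → ℝ)
    (s v : Fin d → ℝ) : Fin d → ℝ :=
  if h : s + c ∈ (d : ℝ) • convexHull ℝ B ∧ v ∈ convexHull ℝ B then
    (step_lemma d B s c v h.1 h.2).choose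
  else 0

open Classical in
lemma pick_spec (d : ℕ) (B : Set (Fin d → ℝ)) (c : Fin d → ℝ) (s v : Fin d → ℝ)
    (h1 : s + c ∈ (d : ℝ) • convexHull ℝ B) (h2 : v ∈ convexHull ℝ B) :
    pick d B c s v ∈ B ∧ (s + v - pick d B c s v) + c ∈ (d : ℝ) • convexHull ℝ B := by
  rw [pick, dif_pos ⟨h1, h2⟩]
  exact (step_lemma d B s c v h1 h2).choose_spec

noncomputable def Ssum (d : ℕ) (B : Set (Fin d → ℝ)) (c : Fin d → ℝ) :
    (j : ℕ) → (Fin j → (Fin d → ℝ)) → (Fin d → ℝ)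
  | 0, _ => 0
  | (j + 1), h =>
      Ssum d B c j (fun i => h i.castSucc) + h (Fin.last j) -
        pick d B c (Ssum d B c j (fun i => h i.castSucc)) (h (Fin.last j))

noncomputable def sigmaFun (d : ℕ) (B : Set (Fin d → ℝ)) (c : Fin d → ℝ)
    (j : ℕ) (h : Fin (j + 1) → (Fin d → ℝ)) : Fin d → ℝ :=
  pick d B c (Ssum d B c j (fun i => h i.castSucc)) (h (Fin.last j))

theorem convex_approximation_game (d : ℕ) (B : Set (Fin d → ℝ))
    (c : Fin d → ℝ) (hc : c ∈ (d : ℝ) • convexHull ℝ B) :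
    (∀ s : Fin d → ℝ, s + c ∈ (d : ℝ) • convexHull ℝ B →
      ∀ v ∈ convexHull ℝ B, ∃ u ∈ B,
        (s + v - u) + c ∈ (d : ℝ) • convexHull ℝ B) ∧
    ∃ σ : (∀ j : ℕ, (Fin (j + 1) → (Fin d → ℝ)) → (Fin d → ℝ)),
      ∀ v : ℕ → (Fin d → ℝ), (∀ i, v i ∈ convexHull ℝ B) →
        (∀ j, σ j (fun i : Fin (j + 1) => v i) ∈ B) ∧
        ∀ j, (∑ i ∈ Finset.range (j + 1),
            (v i - σ i (fun t : Fin (i + 1) => v t))) ∈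
          (d : ℝ) • convexHull ℝ B + {-c} := by
  refine ⟨fun s hs v hv => step_lemma d B s c v hs hv, sigmaFun d B c, fun v hv => ?_⟩
  have key : ∀ j, (Ssum d B c j (fun i : Fin j => v i) + c ∈ (d : ℝ) • convexHull ℝ B) ∧
      Ssum d B c j (fun i : Fin j => v i) =
        ∑ i ∈ Finset.range j, (v i - sigmaFun d B c i (fun t : Fin (i + 1) => v t)) := by
    intro j
    induction j with
    | zero => exact ⟨by simpa [Ssum] using hc, by simp [Ssum]⟩
    | succ j ih =>
      have hrestr : (fun i : Fin j => (fun i : Fin (j + 1) => v i) i.castSucc) =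
          fun i : Fin j => v i := rfl
      have hspec := pick_spec d B c (Ssum d B c j (fun i : Fin j => v i)) (v j) ih.1 (hv j)
      constructor
      · show (Ssum d B c j (fun i : Fin j => v i) + v j -
            pick d B c (Ssum d B c j (fun i : Fin j => v i)) (v j)) + c ∈ _
        exact hspec.2
      · show Ssum d B c j (fun i : Fin j => v i) + v j -
            pick d B c (Ssum d B c j (fun i : Fin j => v i)) (v j) = _
        rw [Finset.sum_range_succ, ← ih.2]
        have : sigmaFun d B c j (fun t : Fin (j + 1) => v t) =
            pick d B c (Ssum d B c j (fun i : Fin j => v i)) (v j) := rfl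
        rw [this]
        abel
  constructor
  · intro j
    exact (pick_spec d B c (Ssum d B c j (fun i : Fin j => v i)) (v j) (key j).1 (hv j)).1
  · intro j
    rw [← (key (j + 1)).2]
    exact Set.mem_add.mpr ⟨Ssum d B c (j + 1) (fun i : Fin (j + 1) => v i) + c, (key (j + 1)).1,
      -c, rfl, by abel⟩
end
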